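/- arXiv:1711.00598 — 4 statements merged into one kernel-verified Lean document; each statement's English description precedes it below -/
import Mathlib

section
/- (Discrete Gronwall-type lemma) Let L be a positive integer and for each n = 1,…,L let b_i^{(n)} > 0 for i = 0,…,n satisfy b_n^{(n)} ≥ Σ_{i=0}^{n-1} b_i^{(n)}. Suppose positive reals ε_1,…,ε_L and positive μ, κ_1,…,κ_L satisfy b_n^{(n)} ε_n ≤ Σ_{k=1}^{n-1} b_k^{(n)} ε_k + b_0^{(n)} μ + κ_n for each n. Then ε_n ≤ μ + (max_{1≤i≤n} κ_i)/(min_{1≤i≤n} b_0^{(i)}) for all n = 1,…,L. -/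
namespace DiscreteGronwallPort

theorem discrete_gronwall (L : ℕ) (hL : 1 ≤ L)
    (b : ℕ → ℕ → ℝ) (ε κ : ℕ → ℝ) (μ : ℝ) (hμ : 0 < μ)
    (hbpos : ∀ n, 1 ≤ n → n ≤ L → ∀ i ≤ n, 0 < b n i)
    (hdom : ∀ n, 1 ≤ n → n ≤ L → (∑ i ∈ Finset.range n, b n i) ≤ b n n)
    (hεpos : ∀ n, 1 ≤ n → n ≤ L → 0 < ε n)
    (hκpos : ∀ n, 1 ≤ n → n ≤ L → 0 < κ n)
    (hrec : ∀ n, 1 ≤ n → n ≤ L →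
      b n n * ε n ≤ (∑ k ∈ Finset.Ico 1 n, b n k * ε k) + b n 0 * μ + κ n) :
    ∀ n, 1 ≤ n → n ≤ L → ∀ hne : (Finset.Icc 1 n).Nonempty,
      ε n ≤ μ + ((Finset.Icc 1 n).sup' hne κ) / ((Finset.Icc 1 n).inf' hne fun i => b i 0) := by
  intro n
  induction n using Nat.strong_induction_on with
  | _ n ih =>
    intro h1n hnL hne
    have hmemn : n ∈ Finset.Icc 1 n := Finset.mem_Icc.2 ⟨h1n, le_refl n⟩
    set S := (Finset.Icc 1 n).sup' hne κ with hSdef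
    set I := (Finset.Icc 1 n).inf' hne (fun i => b i 0) with hIdef
    have hIpos : 0 < I := by
      rw [hIdef, Finset.lt_inf'_iff]
      intro i hi
      obtain ⟨h1, h2⟩ := Finset.mem_Icc.1 hi
      exact hbpos i h1 (h2.trans hnL) 0 (Nat.zero_le i)
    have hSpos : 0 < S := by
      rw [hSdef, Finset.lt_sup'_iff]
      exact ⟨n, hmemn, hκpos n h1n hnL⟩
    have hC : 0 ≤ S / I := le_of_lt (div_pos hSpos hIpos)
    have hκS : κ n ≤ S := Finset.le_sup' κ hmemn
    have hbI : I ≤ b n 0 := Finset.inf'_le _ hmemn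
    have h5 : κ n ≤ b n 0 * (S / I) := by
      have : S = S / I * I := (div_mul_cancel₀ S (ne_of_gt hIpos)).symm
      nlinarith [mul_le_mul_of_nonneg_left hbI hC]
    -- bound earlier ε k
    have hkbound : ∀ k ∈ Finset.Ico 1 n, ε k ≤ μ + S / I := by
      intro k hk
      obtain ⟨h1k, hkn⟩ := Finset.mem_Ico.1 hk
      have hnek : (Finset.Icc 1 k).Nonempty := ⟨k, Finset.mem_Icc.2 ⟨h1k, le_refl k⟩⟩
      have hεk := ih k hkn h1k (le_of_lt (hkn.trans_le hnL)) hnek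
      have hsub : Finset.Icc 1 k ⊆ Finset.Icc 1 n :=
        Finset.Icc_subset_Icc_right (le_of_lt hkn)
      have hSk : (Finset.Icc 1 k).sup' hnek κ ≤ S := by
        apply Finset.sup'_le
        intro i hi
        exact Finset.le_sup' κ (hsub hi)
      have hIk : I ≤ (Finset.Icc 1 k).inf' hnek (fun i => b i 0) := by
        apply Finset.le_inf'
        intro i hi
        exact Finset.inf'_le _ (hsub hi)
      have : (Finset.Icc 1 k).sup' hnek κ / (Finset.Icc 1 k).inf' hnek (fun i => b i 0)
          ≤ S / I := div_le_div₀ (le_of_lt hSpos) hSk hIpos hIk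
      linarith
    have h1 := hrec n h1n hnL
    have h2 : (∑ k ∈ Finset.Ico 1 n, b n k * ε k)
        ≤ (∑ k ∈ Finset.Ico 1 n, b n k) * (μ + S / I) := by
      rw [Finset.sum_mul]
      apply Finset.sum_le_sum
      intro k hk
      obtain ⟨h1k, hkn⟩ := Finset.mem_Ico.1 hk
      exact mul_le_mul_of_nonneg_left (hkbound k hk)
        (le_of_lt (hbpos n h1n hnL k (le_of_lt hkn)))
    have h4 : b n 0 + (∑ k ∈ Finset.Ico 1 n, b n k) ≤ b n n := by
      have := hdom n h1n hnL
      rwa [Finset.range_eq_Ico, Finset.sum_eq_sum_Ico_succ_bot h1n] at this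
    have hbn : 0 < b n n := hbpos n h1n hnL n (le_refl n)
    have hb0 : 0 < b n 0 := hbpos n h1n hnL 0 (Nat.zero_le n)
    have hsum_nonneg : 0 ≤ ∑ k ∈ Finset.Ico 1 n, b n k := by
      apply Finset.sum_nonneg
      intro k hk
      exact le_of_lt (hbpos n h1n hnL k (le_of_lt (Finset.mem_Ico.1 hk).2))
    have key : b n n * ε n ≤ b n n * (μ + S / I) := by nlinarith
    have := (mul_le_mul_iff_of_pos_left hbn).1 key
    linarith

end DiscreteGronwallPort
end

section
/- If a real square matrix A has non-positive off-diagonal entries, positive diagonal entries, and is strictly column diagonally dominant (for each column j, A_{jj} > Σ_{i≠j} |A_{ij}|), then A is nonsingular and A⁻¹ has all nonnegative entries (i.e., A is an M-matrix). -/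
open Matrix
lemma mulVec_nonneg_imp_nonneg (N : ℕ) (B : Matrix (Fin N) (Fin N) ℝ)
    (hoff : ∀ i j, i ≠ j → B i j ≤ 0)
    (hdom : ∀ i, (∑ j ∈ Finset.univ.erase i, |B i j|) < B i i)
    (x : Fin N → ℝ) (hb : ∀ i, 0 ≤ B.mulVec x i) : ∀ i, 0 ≤ x i := by
  intro i
  obtain ⟨k, -, hk⟩ := Finset.exists_min_image Finset.univ x ⟨i, Finset.mem_univ i⟩
  have hki : x k ≤ x i := hk i (Finset.mem_univ i)
  by_contra hneg
  push_neg at hneg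
  have hxk : x k < 0 := lt_of_le_of_lt hki hneg
  have h1 : B.mulVec x k = B k k * x k + ∑ j ∈ Finset.univ.erase k, B k j * x j := by
    rw [Matrix.mulVec, dotProduct]
    rw [← Finset.add_sum_erase _ _ (Finset.mem_univ k)]
  have h2 : ∑ j ∈ Finset.univ.erase k, B k j * x j ≤
      ∑ j ∈ Finset.univ.erase k, B k j * x k := by
    apply Finset.sum_le_sum
    intro j hj
    exact mul_le_mul_of_nonpos_left (hk j (Finset.mem_univ j))
      (hoff k j (Finset.ne_of_mem_erase hj).symm)
  have h3 : ∑ j ∈ Finset.univ.erase k, B k j = -∑ j ∈ Finset.univ.erase k, |B k j| := by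
    rw [← Finset.sum_neg_distrib]
    apply Finset.sum_congr rfl
    intro j hj
    rw [abs_of_nonpos (hoff k j (Finset.ne_of_mem_erase hj).symm)]
    ring
  have h4 : B.mulVec x k ≤ (B k k - ∑ j ∈ Finset.univ.erase k, |B k j|) * x k := by
    rw [h1]
    calc B k k * x k + ∑ j ∈ Finset.univ.erase k, B k j * x j
        ≤ B k k * x k + ∑ j ∈ Finset.univ.erase k, B k j * x k := by linarith
      _ = (B k k + ∑ j ∈ Finset.univ.erase k, B k j) * x k := by
          rw [← Finset.sum_mul]; ring
      _ = (B k k - ∑ j ∈ Finset.univ.erase k, |B k j|) * x k := by rw [h3]; ring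
  have h5 : (B k k - ∑ j ∈ Finset.univ.erase k, |B k j|) * x k < 0 :=
    mul_neg_of_pos_of_neg (by linarith [hdom k]) hxk
  linarith [hb k]

theorem m_matrix_of_column_dominant (N : ℕ) (A : Matrix (Fin N) (Fin N) ℝ)
    (hoff : ∀ i j, i ≠ j → A i j ≤ 0)
    (hdiag : ∀ j, 0 < A j j)
    (hdom : ∀ j, (∑ i ∈ Finset.univ.erase j, |A i j|) < A j j) :
    A.det ≠ 0 ∧ ∀ i j, 0 ≤ A⁻¹ i j := by
  have hdet : A.det ≠ 0 := by
    apply det_ne_zero_of_sum_col_lt_diag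
    intro k
    simpa [Real.norm_eq_abs, abs_of_pos (hdiag k)] using hdom k
  refine ⟨hdet, ?_⟩
  have hunit : IsUnit A.det := isUnit_iff_ne_zero.mpr hdet
  have hB : Aᵀ * (A⁻¹)ᵀ = 1 := by
    rw [Matrix.transpose_nonsing_inv, Matrix.mul_nonsing_inv]
    · rw [Matrix.det_transpose]; exact hunit
  intro i j
  have := mulVec_nonneg_imp_nonneg N Aᵀ
    (fun a b hab => hoff b a hab.symm)
    (fun a => by simpa using hdom a)
    (fun k => (A⁻¹)ᵀ k i)
    (fun l => by
      have : Aᵀ.mulVec (fun k => (A⁻¹)ᵀ k i) l = (Aᵀ * (A⁻¹)ᵀ) l i := by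
        simp [Matrix.mul_apply, Matrix.mulVec, dotProduct]
      rw [this, hB]
      by_cases h : l = i <;> simp [Matrix.one_apply, h])
  simpa [Matrix.transpose_apply] using this j
end

section
/- (Nonnegativity preservation by induction) Let M ∈ ℝ^{N×N} be invertible with M⁻¹ ≥ 0 entrywise and let α ∈ (0,1), a_k = (k+1)^{1-α} - k^{1-α}. If vectors e^n ∈ ℝ^N for n = 1,…,L satisfy M e^n = Σ_{k=1}^{n-1} (a_{n-k-1} - a_{n-k}) e^k + a_{n-1} e^0 + r^n with e^0 ≥ 0 and r^n ≥ 0 entrywise for all n, then e^n ≥ 0 entrywise for every n = 1,…,L. -/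
theorem nonneg_preservation (N L : ℕ) (hN : 1 ≤ N) (hL : 1 ≤ L)
    (α : ℝ) (hα : 0 < α) (hα1 : α < 1)
    (a : ℕ → ℝ) (ha : ∀ k : ℕ, a k = ((k : ℝ) + 1) ^ (1 - α) - (k : ℝ) ^ (1 - α))
    (M : Matrix (Fin N) (Fin N) ℝ) (hdet : M.det ≠ 0)
    (hinv : ∀ i j, 0 ≤ M⁻¹ i j)
    (e r : ℕ → Fin N → ℝ)
    (hrec : ∀ n, 1 ≤ n → n ≤ L → M.mulVec (e n) =
      (∑ k ∈ Finset.Ico 1 n, (a (n - k - 1) - a (n - k)) • e k) + a (n - 1) • e 0 + r n)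
    (h0 : ∀ i, 0 ≤ e 0 i)
    (hr : ∀ n, 1 ≤ n → n ≤ L → ∀ i, 0 ≤ r n i) :
    ∀ n, 1 ≤ n → n ≤ L → ∀ i, 0 ≤ e n i := by
  set p : ℝ := 1 - α with hp
  have hp0 : 0 ≤ p := by linarith
  have hp1 : p ≤ 1 := by linarith
  -- a is nonnegative
  have hanneg : ∀ m : ℕ, 0 ≤ a m := by
    intro m
    rw [ha m]
    have : (m : ℝ) ^ p ≤ ((m : ℝ) + 1) ^ p :=
      Real.rpow_le_rpow (Nat.cast_nonneg m) (by linarith) hp0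
    linarith
  -- a is decreasing (antitone on successors)
  have hamono : ∀ m : ℕ, a (m + 1) ≤ a m := by
    intro m
    have hc := Real.concaveOn_rpow hp0 hp1
    have hmem1 : (m : ℝ) ∈ Set.Ici (0 : ℝ) := Set.mem_Ici.mpr (Nat.cast_nonneg m)
    have hmem2 : ((m : ℝ) + 2) ∈ Set.Ici (0 : ℝ) := by
      simp only [Set.mem_Ici]; positivity
    have h := hc.2 hmem1 hmem2 (by norm_num : (0:ℝ) ≤ 1/2)
      (by norm_num : (0:ℝ) ≤ 1/2) (by norm_num)
    simp only [smul_eq_mul] at h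
    have hmid : (1/2 : ℝ) * (m : ℝ) + (1/2 : ℝ) * ((m : ℝ) + 2) = (m : ℝ) + 1 := by
      ring
    rw [hmid] at h
    rw [ha m, ha (m + 1)]
    push_cast
    have h2 : ((m : ℝ) + 1 + 1) = (m : ℝ) + 2 := by ring
    rw [h2]
    linarith
  intro n
  induction n using Nat.strong_induction_on with
  | _ n ih =>
    intro hn1 hnL i
    have key := hrec n hn1 hnL
    have hunit : IsUnit M.det := isUnit_iff_ne_zero.mpr hdet
    have hMinv : M⁻¹.mulVec (M.mulVec (e n)) = e n := by
      rw [Matrix.mulVec_mulVec, Matrix.nonsing_inv_mul M hunit, Matrix.one_mulVec]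
    rw [← hMinv, key, Matrix.mulVec]
    apply Finset.sum_nonneg
    intro j _
    apply mul_nonneg (hinv i j)
    simp only [Pi.add_apply, Pi.smul_apply, Finset.sum_apply, smul_eq_mul]
    have hterm : ∀ k ∈ Finset.Ico 1 n, 0 ≤ (a (n - k - 1) - a (n - k)) * e k j := by
      intro k hk
      rw [Finset.mem_Ico] at hk
      apply mul_nonneg
      · have hkn : n - k - 1 + 1 = n - k := by omega
        have := hamono (n - k - 1)
        rw [hkn] at this
        linarith
      · exact ih k hk.2 hk.1 (by omega) j
    have hsum : 0 ≤ ∑ k ∈ Finset.Ico 1 n, (a (n - k - 1) - a (n - k)) * e k j :=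
      Finset.sum_nonneg hterm
    have := mul_nonneg (hanneg (n - 1)) (h0 j)
    have := hr n hn1 hnL j
    linarith
end

section
/- (Stability recursion implies boundedness) Let α ∈ (0,1), a_k = (k+1)^{1-α} - k^{1-α}, and suppose nonnegative reals E_0, E_1, …, E_L and a constant K ≥ 0 satisfy E_n ≤ Σ_{k=1}^{n-1} (a_{n-k-1} - a_{n-k}) E_k + a_{n-1} E_0 + a_{n-1} K for all n = 1,…,L. Then E_n ≤ E_0 + K for all n = 1,…,L. -/
theorem stability_boundedness (α : ℝ) (hα : 0 < α) (hα1 : α < 1)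
    (a : ℕ → ℝ) (ha : ∀ k : ℕ, a k = ((k : ℝ) + 1) ^ (1 - α) - (k : ℝ) ^ (1 - α))
    (L : ℕ) (hL : 1 ≤ L) (E : ℕ → ℝ) (hE : ∀ n ≤ L, 0 ≤ E n)
    (K : ℝ) (hK : 0 ≤ K)
    (hrec : ∀ n, 1 ≤ n → n ≤ L →
      E n ≤ (∑ k ∈ Finset.Ico 1 n, (a (n - k - 1) - a (n - k)) * E k)
        + a (n - 1) * E 0 + a (n - 1) * K) :
    ∀ n, 1 ≤ n → n ≤ L → E n ≤ E 0 + K := by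
  have hp0 : (0:ℝ) < 1 - α := by linarith
  have hp1 : (1:ℝ) - α < 1 := by linarith
  -- a is nonnegative
  have ha_nonneg : ∀ k, 0 ≤ a k := by
    intro k
    rw [ha k]
    have : (k:ℝ) ^ (1-α) ≤ ((k:ℝ)+1) ^ (1-α) :=
      Real.rpow_le_rpow (Nat.cast_nonneg k) (by linarith) hp0.le
    linarith
  -- a is decreasing
  have ha_dec : ∀ k : ℕ, a (k+1) ≤ a k := by
    intro k
    have hc := (Real.strictConcaveOn_rpow hp0 hp1).concaveOn
    have hx : (k:ℝ) ∈ Set.Ici (0:ℝ) := Set.mem_Ici.mpr (Nat.cast_nonneg k)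
    have hy : (k:ℝ)+2 ∈ Set.Ici (0:ℝ) := by
      simp only [Set.mem_Ici]; positivity
    have h := hc.2 hx hy (by norm_num : (0:ℝ) ≤ 1/2) (by norm_num : (0:ℝ) ≤ 1/2)
      (by norm_num)
    simp only [smul_eq_mul] at h
    have hmid : (1/2:ℝ) * (k:ℝ) + (1/2) * ((k:ℝ)+2) = (k:ℝ)+1 := by ring
    rw [hmid] at h
    rw [ha (k+1), ha k]
    push_cast
    have h2 : ((k:ℝ)+1+1) = (k:ℝ)+2 := by ring
    rw [h2]
    linarith
  have ha0 : a 0 = 1 := by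
    rw [ha 0]
    simp [Real.zero_rpow (by linarith : (1:ℝ) - α ≠ 0)]
  -- telescoping sum
  have hsum : ∀ n : ℕ, 1 ≤ n →
      ∑ k ∈ Finset.Ico 1 n, (a (n - k - 1) - a (n - k)) = 1 - a (n-1) := by
    intro n hn
    rw [Finset.sum_Ico_eq_sum_range]
    have h1 : ∀ i ∈ Finset.range (n-1), a (n - (1+i) - 1) - a (n - (1+i))
        = a (n-1-1-i) - a ((n-1-1-i)+1) := by
      intro i hi
      simp only [Finset.mem_range] at hi
      congr 2 <;> omega
    rw [Finset.sum_congr rfl h1, Finset.sum_range_reflect (fun i => a i - a (i+1)) (n-1),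
      Finset.sum_range_sub' a (n-1), ha0]
  have hE0K : 0 ≤ E 0 + K := add_nonneg (hE 0 (by omega)) hK
  -- main induction
  intro n
  induction n using Nat.strong_induction_on with
  | _ n ih =>
    intro hn1 hnL
    have hcoef : ∀ k ∈ Finset.Ico 1 n, 0 ≤ a (n - k - 1) - a (n - k) := by
      intro k hk
      simp only [Finset.mem_Ico] at hk
      have h := ha_dec (n - k - 1)
      have he : n - k - 1 + 1 = n - k := by omega
      rw [he] at h
      linarith
    calc E n ≤ (∑ k ∈ Finset.Ico 1 n, (a (n - k - 1) - a (n - k)) * E k)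
        + a (n - 1) * E 0 + a (n - 1) * K := hrec n hn1 hnL
    _ ≤ (∑ k ∈ Finset.Ico 1 n, (a (n - k - 1) - a (n - k)) * (E 0 + K))
        + a (n - 1) * E 0 + a (n - 1) * K := by
        gcongr with k hk
        · exact hcoef k hk
        · simp only [Finset.mem_Ico] at hk
          exact ih k hk.2 hk.1 (by omega)
    _ = (∑ k ∈ Finset.Ico 1 n, (a (n - k - 1) - a (n - k))) * (E 0 + K)
        + a (n - 1) * (E 0 + K) := by rw [← Finset.sum_mul]; ring
    _ = E 0 + K := by rw [hsum n hn1]; ring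
end
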